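/- Let t be the formal power series with t(0)=0 satisfying z^3 = (27/4) t (1-t)^2, and let f_0 = 1/((1-t)(1-3t)) viewed as a power series in z^3. Then the kernel equation F(u)(z^3 U^3 - 3U + 2) = -3U - 2 z^3 U^2 f_0 + 2 f_0 (with u = zU) is consistent: substituting U = 2/(3(1-t)) into the numerator -3U - 2 z^3 U^2 f_0 + 2 f_0 yields 0. -/

import Mathlib

open PowerSeries

/-- With `t ∈ ℚ⟦x⟧`, `t(0)=0`, `x = z³ = (27/4) t (1-t)²`, `f₀ = 1/((1-t)(1-3t))` and
`U = 2/(3(1-t))`: `U` is a root of the kernel `xU³ - 3U + 2`, and `f₀` kills the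
numerator `-3U - 2xU²f₀ + 2f₀`. -/
theorem kernel_root_and_numerator (t : PowerSeries ℚ)
    (h0 : PowerSeries.constantCoeff t = 0)
    (ht : PowerSeries.C (R := ℚ) (27 / 4) * t * (1 - t) ^ 2 = PowerSeries.X) :
    let x : PowerSeries ℚ := PowerSeries.X
    let f₀ : PowerSeries ℚ := ((1 - t) * (1 - 3 * t))⁻¹
    let U : PowerSeries ℚ := PowerSeries.C (R := ℚ) (2 / 3) * (1 - t)⁻¹
    x * U ^ 3 - 3 * U + 2 = 0 ∧
    -3 * U - 2 * x * U ^ 2 * f₀ + 2 * f₀ = 0 := by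
  intro x f₀ U
  have h1 : PowerSeries.constantCoeff (1 - t) ≠ 0 := by simp [h0]
  have h2 : PowerSeries.constantCoeff ((1 - t) * (1 - 3 * t)) ≠ 0 := by simp [h0]
  have ha : (1 - t) * (1 - t)⁻¹ = 1 := PowerSeries.mul_inv_cancel _ h1
  have hb : ((1 - t) * (1 - 3 * t)) * ((1 - t) * (1 - 3 * t))⁻¹ = 1 :=
    PowerSeries.mul_inv_cancel _ h2
  set A : PowerSeries ℚ := (1 - t)⁻¹ with hA
  set B : PowerSeries ℚ := ((1 - t) * (1 - 3 * t))⁻¹ with hB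
  have hC1 : (PowerSeries.C (R := ℚ) (27 / 4)) * (PowerSeries.C (R := ℚ) (2 / 3)) ^ 3 = 2 := by
    rw [← map_pow, ← map_mul]
    norm_num
    rfl
  have hC2 : (3 : PowerSeries ℚ) * PowerSeries.C (R := ℚ) (2 / 3) = 2 := by
    rw [show (3 : PowerSeries ℚ) = PowerSeries.C (R := ℚ) 3 from (map_ofNat _ 3).symm, ← map_mul,
      show (2 : PowerSeries ℚ) = PowerSeries.C (R := ℚ) 2 from (map_ofNat _ 2).symm]
    norm_num
  have hC3 : (2 : PowerSeries ℚ) * (PowerSeries.C (R := ℚ) (27 / 4)) * (PowerSeries.C (R := ℚ) (2 / 3)) ^ 2 = 6 := by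
    rw [show (2 : PowerSeries ℚ) = PowerSeries.C (R := ℚ) 2 from (map_ofNat _ 2).symm,
      show (6 : PowerSeries ℚ) = PowerSeries.C (R := ℚ) 6 from (map_ofNat _ 6).symm,
      ← map_pow, ← map_mul, ← map_mul]
    norm_num
  constructor
  · show PowerSeries.X * (PowerSeries.C (R := ℚ) (2 / 3) * A) ^ 3 - 3 * (PowerSeries.C (R := ℚ) (2 / 3) * A) + 2 = 0
    rw [← ht]
    linear_combination (t * (1 - t) ^ 2 * A ^ 3) * hC1 - A * hC2 +
      (2 * t * A * ((1 - t) * A + 1) - 2) * ha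
  · show -3 * (PowerSeries.C (R := ℚ) (2 / 3) * A) -
      2 * PowerSeries.X * (PowerSeries.C (R := ℚ) (2 / 3) * A) ^ 2 * B + 2 * B = 0
    rw [← ht]
    linear_combination (-(t * (1 - t) ^ 2 * A ^ 2 * B)) * hC3 - A * hC2 +
      (-(6 * t * B * ((1 - t) * A + 1)) - 2 * (1 - 3 * t) * B) * ha + 2 * A * hb
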